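/- arXiv:2312.13185 — 2 statements merged into one kernel-verified Lean document; each statement's English description precedes it below -/
import Mathlib

section
/- The fractal CQCA T̂_c := (∏_{i=1}^{N} H_i) · (∏_{i=1}^{N} CZ_{i,i+1}) · (∏_{i=1}^{N} (√X)_i) on a ring of N ≥ 3 qubits, where √X := H·S·H with S := diag(1,i), implements the local transition rule of Eq. (3): for every site i, T̂_c X_i T̂_c† = X_{i-1} Z_i X_{i+1} and T̂_c Z_i T̂_c† = X_{i-1} Y_i X_{i+1} (indices mod N). -/
open Matrix Complex
open scoped Kronecker Classical

noncomputable section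

namespace QCA

/-- Computational-basis index set of an `N`-qubit register. -/
abbrev QIdx (N : ℕ) := Fin N → Fin 2

/-- Operators (matrices) on an `N`-qubit register `(ℂ²)^{⊗N}`. -/
abbrev MatQ (N : ℕ) := Matrix (QIdx N) (QIdx N) ℂ

/-- Pauli X. -/
def Xg : Matrix (Fin 2) (Fin 2) ℂ := !![0, 1; 1, 0]

/-- Pauli Z. -/
def Zg : Matrix (Fin 2) (Fin 2) ℂ := !![1, 0; 0, -1]

/-- Pauli Y = i·X·Z. -/
def Yg : Matrix (Fin 2) (Fin 2) ℂ := Complex.I • (Xg * Zg)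

/-- Hadamard gate. -/
def Hg : Matrix (Fin 2) (Fin 2) ℂ := (Real.sqrt 2 : ℂ)⁻¹ • !![1, 1; 1, -1]

/-- Phase gate S = diag(1, i). -/
def Sg : Matrix (Fin 2) (Fin 2) ℂ := !![1, 0; 0, Complex.I]

/-- √X := H·S·H. -/
def sqrtXg : Matrix (Fin 2) (Fin 2) ℂ := Hg * Sg * Hg

/-- The ket |+⟩ = (|0⟩+|1⟩)/√2. -/
def ketPlus : Fin 2 → ℂ := fun _ => (Real.sqrt 2 : ℂ)⁻¹

/-- The bra ⟨+|. -/
def braPlus : Fin 2 → ℂ := fun a => star (ketPlus a)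

/-- The product state |+⟩^{⊗ι}. -/
def ketPlusAll (ι : Type*) [Fintype ι] : (ι → Fin 2) → ℂ := fun s => ∏ i, ketPlus (s i)

/-- Kronecker product of two vectors. -/
def kronVec {a b : Type*} (v : a → ℂ) (w : b → ℂ) : a × b → ℂ := fun p => v p.1 * w p.2

variable {ι : Type*} [Fintype ι] [DecidableEq ι]

/-- `op1 P i` acts as the one-qubit operator `P` on qubit `i` and as the identity elsewhere. -/
def op1 (P : Matrix (Fin 2) (Fin 2) ℂ) (i : ι) : Matrix (ι → Fin 2) (ι → Fin 2) ℂ :=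
  fun s t => P (s i) (t i) * ∏ j ∈ Finset.univ.erase i, (if s j = t j then (1 : ℂ) else 0)

/-- Controlled-Z gate between qubits `i` and `j` (identity elsewhere). -/
def cz2 (i j : ι) : Matrix (ι → Fin 2) (ι → Fin 2) ℂ :=
  Matrix.diagonal fun s => if s i = 1 ∧ s j = 1 then (-1 : ℂ) else 1

/-- The Z-rotation exp(iθ Z_i) on qubit `i`. -/
def rotZ (θ : ℝ) (i : ι) : Matrix (ι → Fin 2) (ι → Fin 2) ℂ :=
  NormedSpace.exp (((θ : ℂ) * Complex.I) • op1 Zg i)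

/-- The layer ∏_{i=1}^{N} H_i of Hadamards on every site of a ring of `N` qubits. -/
def hadamardLayer (N : ℕ) : MatQ N := (List.ofFn fun i : Fin N => op1 Hg i).prod

/-- The layer ∏_{i=1}^{N} CZ_{i,i+1} of controlled-Z gates on a ring of `N` qubits
(site indices mod `N`; the factors pairwise commute). -/
def czRing (N : ℕ) [NeZero N] : MatQ N := (List.ofFn fun i : Fin N => cz2 i (i + 1)).prod

/-- The layer ∏_{i=1}^{N} (√X)_i on a ring of `N` qubits. -/
def sqrtXLayer (N : ℕ) : MatQ N := (List.ofFn fun i : Fin N => op1 sqrtXg i).prod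

/-- The cluster CQCA T_c = (∏ H_i)·(∏ CZ_{i,i+1}) on a ring of `N` qubits. -/
def Tc (N : ℕ) [NeZero N] : MatQ N := hadamardLayer N * czRing N

/-- The periodic CQCA T̃_c = ∏ CZ_{i,i+1} on a ring of `N` qubits. -/
def Ttc (N : ℕ) [NeZero N] : MatQ N := czRing N

/-- The fractal CQCA T̂_c = (∏ H_i)·(∏ CZ_{i,i+1})·(∏ (√X)_i) on a ring of `N` qubits. -/
def Thc (N : ℕ) [NeZero N] : MatQ N := hadamardLayer N * czRing N * sqrtXLayer N

/-- Controlled-Z between input qubit `i` and output qubit `i` on a doubled register. -/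
def czIO {N : ℕ} (i : Fin N) : Matrix (QIdx N × QIdx N) (QIdx N × QIdx N) ℂ :=
  Matrix.diagonal fun p => if p.1 i = 1 ∧ p.2 i = 1 then (-1 : ℂ) else 1

/-- The unitary U_T = (1 ⊗ T)·(∏_i H_i^{(out)})·(∏_i CZ_{i,i}^{(in,out)}) of Eq. (16). -/
def UT {N : ℕ} (T : MatQ N) : Matrix (QIdx N × QIdx N) (QIdx N × QIdx N) ℂ :=
  ((1 : MatQ N) ⊗ₖ T) *
    (List.ofFn fun i : Fin N => (1 : MatQ N) ⊗ₖ op1 Hg i).prod *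
    (List.ofFn fun i : Fin N => czIO i).prod

/-- Contraction of the input register with the product bra `⊗_i bra i`. -/
def contractIn {N : ℕ} (bra : Fin N → Fin 2 → ℂ) (v : QIdx N × QIdx N → ℂ) : QIdx N → ℂ :=
  fun t => ∑ s : QIdx N, (∏ i, bra i (s i)) * v (s, t)

lemma diagonal_commute {α : Type*} [Fintype α] [DecidableEq α] (d e : α → ℂ) :
    Commute (Matrix.diagonal d) (Matrix.diagonal e) := by
  unfold Commute SemiconjBy
  have h : (fun i => d i * e i) = fun i => e i * d i := by funext x; ring
  rw [Matrix.diagonal_mul_diagonal, Matrix.diagonal_mul_diagonal, h]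

lemma Zg_eq_diagonal : Zg = Matrix.diagonal ![1, -1] := by
  ext i j
  fin_cases i <;> fin_cases j <;> simp [Zg, Matrix.diagonal]

lemma op1_diagonal (d : Fin 2 → ℂ) (i : ι) :
    op1 (Matrix.diagonal d) i = Matrix.diagonal (fun s => d (s i)) := by
  ext s t
  by_cases h : s = t
  · subst h
    simp [op1, Matrix.diagonal_apply_eq]
  · rw [Matrix.diagonal_apply_ne _ h]
    by_cases hi : s i = t i
    · obtain ⟨k, hk⟩ : ∃ k, s k ≠ t k := Function.ne_iff.mp h
      have hki : k ≠ i := by rintro rfl; exact hk hi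
      have h0 : (if s k = t k then (1 : ℂ) else 0) = 0 := by simp [hk]
      unfold op1
      rw [Finset.prod_eq_zero (Finset.mem_erase.mpr ⟨hki, Finset.mem_univ k⟩) h0]
      ring
    · unfold op1
      rw [Matrix.diagonal_apply_ne _ hi]
      ring

/-- The controlled-Z gate attached to an (undirected) edge `e`. -/
def czEdge {N : ℕ} (e : Sym2 (Fin N)) : MatQ N :=
  Matrix.diagonal fun s => if ∀ i ∈ e, s i = 1 then (-1 : ℂ) else 1

/-- The unitary ∏_{{i,j} ∈ E(G)} CZ_{i,j} preparing the graph state (the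
factors pairwise commute, so the product over the edge set is well defined). -/
def graphUnitary {N : ℕ} (G : SimpleGraph (Fin N)) [DecidableRel G.Adj] : MatQ N :=
  G.edgeFinset.noncommProd czEdge (by intro a _ b _ _; exact diagonal_commute _ _)

/-- The graph state |G⟩ = (∏_{{i,j} ∈ E(G)} CZ_{i,j}) |+⟩^{⊗N}. -/
def graphState {N : ℕ} (G : SimpleGraph (Fin N)) [DecidableRel G.Adj] : QIdx N → ℂ :=
  (graphUnitary G).mulVec (ketPlusAll (Fin N))

/-- The stabilizer generator K_v = X_v · ∏_{w ∈ N_G(v)} Z_w of the graph state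
(the Z factors pairwise commute, so the product is well defined). -/
def stabGen {N : ℕ} (G : SimpleGraph (Fin N)) [DecidableRel G.Adj] (v : Fin N) : MatQ N :=
  op1 Xg v *
    (G.neighborFinset v).noncommProd (fun w => op1 Zg w)
      (by
        intro a _ b _ _
        simp only [Function.onFun]
        rw [Zg_eq_diagonal, op1_diagonal, op1_diagonal]
        exact diagonal_commute _ _)



/-! ### Auxiliary machinery for the fractal CQCA theorem -/

section Aux

set_option linter.unusedSectionVars false

/-- Full Kronecker product of a family of one-qubit operators. -/
def kronAll (f : ι → Matrix (Fin 2) (Fin 2) ℂ) : Matrix (ι → Fin 2) (ι → Fin 2) ℂ :=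
  fun s t => ∏ j, f j (s j) (t j)

lemma kronAll_apply (f : ι → Matrix (Fin 2) (Fin 2) ℂ) (s t : ι → Fin 2) :
    kronAll f s t = ∏ j, f j (s j) (t j) := rfl

lemma kronAll_mul (f g : ι → Matrix (Fin 2) (Fin 2) ℂ) :
    kronAll f * kronAll g = kronAll (fun j => f j * g j) := by
  ext s t
  simp only [Matrix.mul_apply, kronAll]
  rw [Finset.prod_univ_sum, Fintype.piFinset_univ]
  exact Finset.sum_congr rfl fun u _ => Finset.prod_mul_distrib.symm

lemma kronAll_one : kronAll (fun _ : ι => (1 : Matrix (Fin 2) (Fin 2) ℂ)) = 1 := by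
  ext s t
  by_cases h : s = t
  · subst h; simp [kronAll, Matrix.one_apply]
  · obtain ⟨j, hj⟩ := Function.ne_iff.mp h
    rw [kronAll, Matrix.one_apply_ne h, Finset.prod_eq_zero (Finset.mem_univ j)]
    simp [Matrix.one_apply, hj]

lemma kronAll_conjTranspose (f : ι → Matrix (Fin 2) (Fin 2) ℂ) :
    (kronAll f)ᴴ = kronAll (fun j => (f j)ᴴ) := by
  ext s t
  simp [kronAll, Matrix.conjTranspose_apply, star_prod]

lemma op1_eq_kron (P : Matrix (Fin 2) (Fin 2) ℂ) (i : ι) :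
    op1 P i = kronAll (fun j => if j = i then P else 1) := by
  ext s t
  rw [kronAll, ← Finset.mul_prod_erase Finset.univ _ (Finset.mem_univ i)]
  simp only [if_pos rfl, op1]
  congr 1
  refine Finset.prod_congr rfl fun j hj => ?_
  rw [if_neg (Finset.mem_erase.mp hj).1, Matrix.one_apply]

lemma layer_eq_kron (g : Matrix (Fin 2) (Fin 2) ℂ) (N : ℕ) :
    (List.ofFn fun i : Fin N => op1 g i).prod = kronAll (fun _ : Fin N => g) := by
  have key : ∀ l : List (Fin N), l.Nodup →
      (l.map fun i => op1 g i).prod = kronAll (fun j => if j ∈ l then g else 1) := by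
    intro l hl
    induction l with
    | nil => simpa using kronAll_one.symm
    | cons a l ih =>
      have hal : a ∉ l := (List.nodup_cons.mp hl).1
      rw [List.map_cons, List.prod_cons, ih (List.nodup_cons.mp hl).2,
        op1_eq_kron, kronAll_mul]
      refine congrArg kronAll (funext fun j => ?_)
      by_cases hja : j = a
      · subst hja; simp [hal]
      · simp [hja, List.mem_cons]
  rw [List.ofFn_eq_map, key _ (List.nodup_finRange N)]
  exact congrArg kronAll (funext fun j => by simp [List.mem_finRange])

lemma layer_comm (g A B : Matrix (Fin 2) (Fin 2) ℂ) (h : g * A = B * g) {N : ℕ} (i : Fin N) :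
    kronAll (fun _ : Fin N => g) * op1 A i = op1 B i * kronAll (fun _ : Fin N => g) := by
  rw [op1_eq_kron, op1_eq_kron, kronAll_mul, kronAll_mul]
  refine congrArg kronAll (funext fun j => ?_)
  by_cases hj : j = i <;> simp [hj, h]

/-! ### One-qubit gate identities -/

lemma h2c : ((Real.sqrt 2 : ℝ) : ℂ) * ((Real.sqrt 2 : ℝ) : ℂ) = 2 := by
  rw [← Complex.ofReal_mul, Real.mul_self_sqrt (by norm_num)]; norm_num

lemma hinv : ((Real.sqrt 2:ℝ):ℂ)⁻¹ * ((Real.sqrt 2:ℝ):ℂ)⁻¹ = (2:ℂ)⁻¹ := by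
  rw [← mul_inv, h2c]

lemma Hg_mul_Hg : Hg * Hg = 1 := by
  have h : Hg * Hg = (((Real.sqrt 2:ℝ):ℂ)⁻¹ * ((Real.sqrt 2:ℝ):ℂ)⁻¹) •
      (!![(1:ℂ),1;1,-1] * !![(1:ℂ),1;1,-1]) := by
    simp only [Hg, smul_mul_assoc, mul_smul_comm, smul_smul]
  have hA : !![(1:ℂ),1;1,-1] * !![(1:ℂ),1;1,-1] = (2:ℂ) • 1 := by
    ext i j; fin_cases i <;> fin_cases j <;>
      simp [Matrix.mul_apply, Fin.sum_univ_two, Matrix.one_apply] <;> norm_num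
  rw [h, hinv, hA, smul_smul]
  norm_num

lemma Hg_conjTranspose : Hgᴴ = Hg := by
  ext i j; fin_cases i <;> fin_cases j <;>
    simp [Hg, Matrix.conjTranspose_apply, Complex.ext_iff]

lemma Hg_mul_Xg : Hg * Xg = Zg * Hg := by
  ext i j; fin_cases i <;> fin_cases j <;>
    simp [Hg, Xg, Zg, Matrix.mul_apply, Fin.sum_univ_two]

lemma Hg_mul_Zg : Hg * Zg = Xg * Hg := by
  ext i j; fin_cases i <;> fin_cases j <;>
    simp [Hg, Xg, Zg, Matrix.mul_apply, Fin.sum_univ_two]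

lemma Yg_eq : Yg = !![0, -Complex.I; Complex.I, 0] := by
  ext i j; fin_cases i <;> fin_cases j <;>
    simp [Yg, Xg, Zg, Matrix.mul_apply, Fin.sum_univ_two]

lemma Hg_mul_negYg : Hg * (-Yg) = Yg * Hg := by
  rw [Yg_eq]
  ext i j; fin_cases i <;> fin_cases j <;>
    simp [Hg, Matrix.mul_apply, Fin.sum_univ_two] <;> ring

lemma sqrtXg_eq :
    sqrtXg = (2:ℂ)⁻¹ • !![1+Complex.I, 1-Complex.I; 1-Complex.I, 1+Complex.I] := by
  have h : sqrtXg = (((Real.sqrt 2:ℝ):ℂ)⁻¹ * ((Real.sqrt 2:ℝ):ℂ)⁻¹) •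
      (!![(1:ℂ),1;1,-1] * Sg * !![(1:ℂ),1;1,-1]) := by
    simp only [sqrtXg, Hg, smul_mul_assoc, mul_smul_comm, smul_smul]
  rw [h, hinv]
  congr 1
  ext i j; fin_cases i <;> fin_cases j <;>
    simp [Sg, Matrix.mul_apply, Fin.sum_univ_two] <;> ring

lemma sX_mul_X : sqrtXg * Xg = Xg * sqrtXg := by
  rw [sqrtXg_eq]
  ext i j; fin_cases i <;> fin_cases j <;>
    simp [Xg, Matrix.mul_apply, Fin.sum_univ_two]

lemma sX_mul_Z : sqrtXg * Zg = (-Yg) * sqrtXg := by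
  rw [sqrtXg_eq, Yg_eq]
  ext i j; fin_cases i <;> fin_cases j <;>
    simp [Zg, Matrix.mul_apply, Fin.sum_univ_two] <;>
    ring_nf <;> simp [Complex.I_sq] <;> ring_nf

lemma sX_unitary : sqrtXg * sqrtXgᴴ = 1 := by
  rw [sqrtXg_eq]
  ext i j; fin_cases i <;> fin_cases j <;>
    simp [Matrix.mul_apply, Fin.sum_univ_two, Matrix.conjTranspose_apply,
      Matrix.one_apply, Complex.ext_iff] <;> ring_nf

lemma Zg_apply_ne {a b : Fin 2} (h : a ≠ b) : Zg a b = 0 := by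
  fin_cases a <;> fin_cases b <;> simp_all [Zg]

lemma Xg_diag (a : Fin 2) : Xg a a = 0 := by
  fin_cases a <;> simp [Xg]

lemma negYg_diag (a : Fin 2) : (-Yg) a a = 0 := by
  rw [Yg_eq]; fin_cases a <;> simp

/-! ### The CZ ring as a diagonal matrix -/

/-- The diagonal of the CZ ring. -/
def czD (N : ℕ) [NeZero N] : QIdx N → ℂ :=
  fun s => ∏ k : Fin N, if s k = 1 ∧ s (k+1) = 1 then (-1:ℂ) else 1

lemma list_prod_diagonal {α : Type*} [Fintype α] [DecidableEq α] (l : List (α → ℂ)) :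
    (l.map Matrix.diagonal).prod = Matrix.diagonal (fun s => (l.map (fun d => d s)).prod) := by
  induction l with
  | nil => simp
  | cons d l ih =>
    rw [List.map_cons, List.prod_cons, ih, Matrix.diagonal_mul_diagonal]
    exact congrArg Matrix.diagonal (funext fun s => by simp)

lemma czRing_eq (N : ℕ) [NeZero N] : czRing N = Matrix.diagonal (czD N) := by
  unfold czRing cz2
  have hmap : (List.ofFn fun i : Fin N =>
        Matrix.diagonal fun s : QIdx N => if s i = 1 ∧ s (i+1) = 1 then (-1:ℂ) else 1)
      = (List.ofFn fun i : Fin N =>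
        (fun s : QIdx N => if s i = 1 ∧ s (i+1) = 1 then (-1:ℂ) else 1)).map
          Matrix.diagonal := by
    rw [List.map_ofFn]; rfl
  rw [hmap, list_prod_diagonal]
  refine congrArg Matrix.diagonal (funext fun s => ?_)
  rw [List.map_ofFn, List.prod_ofFn]
  rfl

lemma czRing_unitary (N : ℕ) [NeZero N] : czRing N * (czRing N)ᴴ = 1 := by
  rw [czRing_eq, Matrix.diagonal_conjTranspose, Matrix.diagonal_mul_diagonal,
    ← Matrix.diagonal_one]
  refine congrArg Matrix.diagonal (funext fun s => ?_)
  show czD N s * star (czD N s) = 1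
  unfold czD
  rw [star_prod, ← Finset.prod_mul_distrib]
  refine Finset.prod_eq_one fun k _ => ?_
  split_ifs <;> simp

end Aux

/-! ### The CZ-ring conjugation rule -/

lemma cz_conj {N : ℕ} [NeZero N] (hN : 3 ≤ N) (i : Fin N)
    (A : Matrix (Fin 2) (Fin 2) ℂ) (hA : ∀ a, A a a = 0) :
    czRing N * op1 A i = op1 Zg (i-1) * op1 A i * op1 Zg (i+1) * czRing N := by
  have h1 : (1 : Fin N) ≠ 0 := by
    open Fin.NatCast in
    have h : ((1:ℕ) : Fin N) = (1 : Fin N) := by norm_cast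
    rw [← h, Ne, Fin.natCast_eq_zero]
    intro hd; have := Nat.le_of_dvd (by norm_num) hd; omega
  have h2 : (1 : Fin N) + 1 ≠ 0 := by
    open Fin.NatCast in
    have h : ((2:ℕ) : Fin N) = (1 : Fin N) + 1 := by push_cast; exact one_add_one_eq_two.symm
    rw [← h, Ne, Fin.natCast_eq_zero]
    intro hd; have := Nat.le_of_dvd (by norm_num) hd; omega
  have hd1 : i - 1 ≠ i := by
    intro h
    have h' : i + 0 = i + 1 := by simpa using sub_eq_iff_eq_add.mp h
    exact h1 (add_left_cancel h').symm
  have hd2 : i + 1 ≠ i := by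
    intro h
    have h' : i + 1 = i + 0 := by simpa using h
    exact h1 (add_left_cancel h')
  have hd3 : i - 1 ≠ i + 1 := by
    intro h
    have h' : i + 0 = i + (1 + 1) := by
      rw [add_zero, ← add_assoc]; exact sub_eq_iff_eq_add.mp h
    exact h2 (add_left_cancel h').symm
  set g : Fin N → Matrix (Fin 2) (Fin 2) ℂ :=
    fun j => if j = i - 1 then Zg else if j = i then A else if j = i + 1 then Zg else 1
    with hgdef
  have hg : op1 Zg (i-1) * op1 A i * op1 Zg (i+1) = kronAll g := by
    rw [op1_eq_kron, op1_eq_kron, op1_eq_kron, kronAll_mul, kronAll_mul]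
    refine congrArg kronAll (funext fun j => ?_)
    by_cases hj1 : j = i - 1
    · subst hj1; simp [hgdef, hd1, hd3]
    · by_cases hj2 : j = i
      · subst hj2; simp [hgdef, Ne.symm hd1, Ne.symm hd2]
      · by_cases hj3 : j = i + 1
        · subst hj3; simp [hgdef, Ne.symm hd3, hd2]
        · simp [hgdef, hj1, hj2, hj3]
  rw [hg, czRing_eq, op1_eq_kron]
  ext s t
  rw [Matrix.diagonal_mul, Matrix.mul_diagonal]
  by_cases hst : ∀ j, j ≠ i → s j = t j
  · by_cases hii : s i = t i
    · have hsteq : s = t := funext fun j => by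
        by_cases hj : j = i
        · subst hj; exact hii
        · exact hst j hj
      subst hsteq
      have hL : kronAll (fun j => if j = i then A else 1) s s = 0 :=
        Finset.prod_eq_zero (Finset.mem_univ i) (by simp [hA])
      have hR : kronAll g s s = 0 :=
        Finset.prod_eq_zero (Finset.mem_univ i) (by simp [hgdef, Ne.symm hd1, hA])
      rw [hL, hR]; ring
    · -- main case: s and t agree off `i` and differ at `i`
      have hf : kronAll (fun j => if j = i then A else 1) s t = A (s i) (t i) := by
        rw [kronAll_apply, ← Finset.mul_prod_erase Finset.univ _ (Finset.mem_univ i),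
          if_pos rfl, Finset.prod_eq_one, mul_one]
        intro j hj
        have hji := (Finset.mem_erase.mp hj).1
        rw [if_neg hji, hst j hji, Matrix.one_apply_eq]
      have e1 : i ∈ Finset.univ.erase (i-1) :=
        Finset.mem_erase.mpr ⟨Ne.symm hd1, Finset.mem_univ i⟩
      have e2 : i + 1 ∈ (Finset.univ.erase (i-1)).erase i :=
        Finset.mem_erase.mpr ⟨hd2, Finset.mem_erase.mpr ⟨Ne.symm hd3, Finset.mem_univ _⟩⟩
      have hgp : kronAll g s t
          = Zg (s (i-1)) (s (i-1)) * (A (s i) (t i) * Zg (s (i+1)) (s (i+1))) := by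
        rw [kronAll_apply, ← Finset.mul_prod_erase _ _ (Finset.mem_univ (i-1)),
          ← Finset.mul_prod_erase _ _ e1, ← Finset.mul_prod_erase _ _ e2]
        have hrest : ∏ j ∈ (((Finset.univ.erase (i-1)).erase i).erase (i+1)),
            g j (s j) (t j) = 1 := by
          refine Finset.prod_eq_one fun j hj => ?_
          have hj3 := (Finset.mem_erase.mp hj).1
          have hj2 := (Finset.mem_erase.mp (Finset.mem_erase.mp hj).2).1
          have hj1 := (Finset.mem_erase.mp
            (Finset.mem_erase.mp (Finset.mem_erase.mp hj).2).2).1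
          rw [hgdef]
          simp only [if_neg hj1, if_neg hj2, if_neg hj3]
          rw [hst j hj2, Matrix.one_apply_eq]
        rw [hrest, mul_one]
        have hg1 : g (i-1) = Zg := by rw [hgdef]; simp
        have hg2 : g i = A := by rw [hgdef]; simp [Ne.symm hd1]
        have hg3 : g (i+1) = Zg := by rw [hgdef]; simp [Ne.symm hd3, hd2]
        rw [hg1, hg2, hg3, ← hst (i-1) hd1, ← hst (i+1) hd2]
      have h01 : ∀ a : Fin 2, a = 0 ∨ a = 1 := by decide
      have hD : czD N s = Zg (s (i-1)) (s (i-1)) * Zg (s (i+1)) (s (i+1)) * czD N t := by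
        have hk : ∀ k : Fin N, (if s k = 1 ∧ s (k+1) = 1 then (-1:ℂ) else 1) =
            (if k = i - 1 then Zg (s k) (s k) else 1) *
            ((if k = i then Zg (s (k+1)) (s (k+1)) else 1) *
             (if t k = 1 ∧ t (k+1) = 1 then (-1:ℂ) else 1)) := by
          intro k
          by_cases hk1 : k = i - 1
          · subst hk1
            have hkk : i - 1 + 1 = i := sub_add_cancel _ _
            rw [if_pos rfl, if_neg hd1, hkk, ← hst (i-1) hd1]
            rcases h01 (s (i-1)) with h|h <;> rcases h01 (s i) with h'|h' <;>
              rcases h01 (t i) with h''|h'' <;> simp_all [Zg]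
          · by_cases hk2 : k = i
            · subst hk2
              rw [if_neg hk1, if_pos rfl, ← hst (k+1) hd2]
              rcases h01 (s (k+1)) with h|h <;> rcases h01 (s k) with h'|h' <;>
                rcases h01 (t k) with h''|h'' <;> simp_all [Zg]
            · have hk3 : k + 1 ≠ i := fun h => hk1 (eq_sub_of_add_eq h)
              rw [if_neg hk1, if_neg hk2, ← hst k hk2, ← hst (k+1) hk3, one_mul, one_mul]
        unfold czD
        rw [Finset.prod_congr rfl (fun k _ => hk k), Finset.prod_mul_distrib,
          Finset.prod_mul_distrib, Finset.prod_ite_eq', Finset.prod_ite_eq']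
        simp only [Finset.mem_univ, if_true]
        ring
      rw [hf, hgp, hD]; ring
  · push_neg at hst
    obtain ⟨j, hji, hj⟩ := hst
    have hL : kronAll (fun j => if j = i then A else 1) s t = 0 :=
      Finset.prod_eq_zero (Finset.mem_univ j)
        (by simp [hji, Matrix.one_apply_ne hj])
    have hR : kronAll g s t = 0 := by
      refine Finset.prod_eq_zero (Finset.mem_univ j) ?_
      rw [hgdef]
      by_cases hj1 : j = i - 1
      · simp only [if_pos hj1]; exact Zg_apply_ne hj
      · by_cases hj3 : j = i + 1
        · simp only [if_neg hj1, if_neg hji, if_pos hj3]; exact Zg_apply_ne hj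
        · simp only [if_neg hj1, if_neg hji, if_neg hj3]; exact Matrix.one_apply_ne hj
    rw [hL, hR]; ring


/-- the fractal CQCA `T̂_c = (∏H_i)(∏CZ_{i,i+1})(∏(√X)_i)` satisfies
`T̂_c X_i T̂_c† = X_{i-1} Z_i X_{i+1}` and `T̂_c Z_i T̂_c† = X_{i-1} Y_i X_{i+1}`. -/
theorem fractal_cqca_rule {N : ℕ} [NeZero N] (hN : 3 ≤ N) (i : Fin N) :
    Thc N * op1 Xg i * (Thc N)ᴴ = op1 Xg (i - 1) * op1 Zg i * op1 Xg (i + 1) ∧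
    Thc N * op1 Zg i * (Thc N)ᴴ = op1 Xg (i - 1) * op1 Yg i * op1 Xg (i + 1) := by
  have hHL : hadamardLayer N = kronAll (fun _ : Fin N => Hg) := layer_eq_kron Hg N
  have hXL : sqrtXLayer N = kronAll (fun _ : Fin N => sqrtXg) := layer_eq_kron sqrtXg N
  set HL := kronAll (fun _ : Fin N => Hg) with hHLdef
  set XL := kronAll (fun _ : Fin N => sqrtXg) with hXLdef
  have hThc : Thc N = HL * czRing N * XL := by
    unfold Thc; rw [hHL, hXL]
  have hHLu : HL * HLᴴ = 1 := by
    rw [hHLdef, kronAll_conjTranspose, kronAll_mul,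
      show (fun _ : Fin N => Hg * Hgᴴ) = fun _ : Fin N => (1 : Matrix (Fin 2) (Fin 2) ℂ)
        from funext fun _ => by rw [Hg_conjTranspose, Hg_mul_Hg]]
    exact kronAll_one
  have hXLu : XL * XLᴴ = 1 := by
    rw [hXLdef, kronAll_conjTranspose, kronAll_mul,
      show (fun _ : Fin N => sqrtXg * sqrtXgᴴ) = fun _ : Fin N => (1 : Matrix (Fin 2) (Fin 2) ℂ)
        from funext fun _ => by rw [sX_unitary]]
    exact kronAll_one
  have hCZu := czRing_unitary N
  have hunit : Thc N * (Thc N)ᴴ = 1 := by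
    rw [hThc, Matrix.conjTranspose_mul, Matrix.conjTranspose_mul]
    calc HL * czRing N * XL * (XLᴴ * ((czRing N)ᴴ * HLᴴ))
        = HL * (czRing N * (XL * (XLᴴ * ((czRing N)ᴴ * HLᴴ)))) := by
          simp only [mul_assoc]
      _ = HL * (czRing N * ((czRing N)ᴴ * HLᴴ)) := by
          rw [← mul_assoc XL, hXLu, one_mul]
      _ = HL * HLᴴ := by rw [← mul_assoc (czRing N), hCZu, one_mul]
      _ = 1 := hHLu
  have had : ∀ (A B : Matrix (Fin 2) (Fin 2) ℂ), Hg * A = B * Hg →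
      ∀ (j : Fin N) (M : MatQ N), HL * (op1 A j * M) = op1 B j * (HL * M) := by
    intro A B h j M
    rw [← mul_assoc, hHLdef, layer_comm Hg A B h j, mul_assoc]
  have hcz : ∀ (A : Matrix (Fin 2) (Fin 2) ℂ), (∀ a, A a a = 0) → ∀ M : MatQ N,
      czRing N * (op1 A i * M)
        = op1 Zg (i-1) * (op1 A i * (op1 Zg (i+1) * (czRing N * M))) := by
    intro A hA M
    rw [← mul_assoc, cz_conj hN i A hA]
    simp only [mul_assoc]
  have hx : ∀ (A B : Matrix (Fin 2) (Fin 2) ℂ), sqrtXg * A = B * sqrtXg →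
      XL * op1 A i = op1 B i * XL := fun A B h => by
    rw [hXLdef]; exact layer_comm _ _ _ h i
  constructor
  · have key : Thc N * op1 Xg i = op1 Xg (i-1) * op1 Zg i * op1 Xg (i+1) * Thc N := by
      rw [hThc]
      simp only [mul_assoc]
      rw [hx Xg Xg sX_mul_X, hcz Xg Xg_diag XL, had Zg Xg Hg_mul_Zg (i-1) _,
        had Xg Zg Hg_mul_Xg i _, had Zg Xg Hg_mul_Zg (i+1) _]
    calc Thc N * op1 Xg i * (Thc N)ᴴ
        = op1 Xg (i-1) * op1 Zg i * op1 Xg (i+1) * Thc N * (Thc N)ᴴ := by rw [key]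
      _ = op1 Xg (i-1) * op1 Zg i * op1 Xg (i+1) * (Thc N * (Thc N)ᴴ) := by
          rw [mul_assoc]
      _ = op1 Xg (i-1) * op1 Zg i * op1 Xg (i+1) := by rw [hunit, mul_one]
  · have key : Thc N * op1 Zg i = op1 Xg (i-1) * op1 Yg i * op1 Xg (i+1) * Thc N := by
      rw [hThc]
      simp only [mul_assoc]
      rw [hx Zg (-Yg) sX_mul_Z, hcz (-Yg) negYg_diag XL, had Zg Xg Hg_mul_Zg (i-1) _,
        had (-Yg) Yg Hg_mul_negYg i _, had Zg Xg Hg_mul_Zg (i+1) _]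
    calc Thc N * op1 Zg i * (Thc N)ᴴ
        = op1 Xg (i-1) * op1 Yg i * op1 Xg (i+1) * Thc N * (Thc N)ᴴ := by rw [key]
      _ = op1 Xg (i-1) * op1 Yg i * op1 Xg (i+1) * (Thc N * (Thc N)ᴴ) := by
          rw [mul_assoc]
      _ = op1 Xg (i-1) * op1 Yg i * op1 Xg (i+1) := by rw [hunit, mul_one]

end QCA

end
end

section
/- One unit cell of MBQC implements the CQCA deterministically (the case of all-|+⟩ measurement outcomes): for every N-qubit unitary T and every vector |ψ⟩ ∈ (ℂ²)^{⊗N}, (√2)^N · (⟨+|^{⊗N} ⊗ 1) · U_T · (|ψ⟩ ⊗ |+⟩^{⊗N}) = T |ψ⟩, where ⟨+|^{⊗N} ⊗ 1 : (ℂ²)^{⊗N} ⊗ (ℂ²)^{⊗N} → (ℂ²)^{⊗N} denotes the linear map contracting the input register with the product bra ⟨+|^{⊗N}. -/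
open Matrix Complex
open scoped Kronecker Classical

noncomputable section

namespace QCA

variable {ι : Type*} [Fintype ι] [DecidableEq ι]

/-! ### Auxiliary lemmas for the MBQC unit-cell theorem -/

/-- The tensor product `⊗_i g i` of one-qubit operators. -/
def tensorOf {ι : Type*} [Fintype ι] (g : ι → Matrix (Fin 2) (Fin 2) ℂ) :
    Matrix (ι → Fin 2) (ι → Fin 2) ℂ :=
  Matrix.of fun s t => ∏ i, g i (s i) (t i)

lemma tensorOf_apply {ι : Type*} [Fintype ι] (g : ι → Matrix (Fin 2) (Fin 2) ℂ)
    (s t : ι → Fin 2) : tensorOf g s t = ∏ i, g i (s i) (t i) := rfl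

lemma tensorOf_one {ι : Type*} [Fintype ι] [DecidableEq ι] :
    tensorOf (fun _ : ι => (1 : Matrix (Fin 2) (Fin 2) ℂ)) = 1 := by
  ext s t
  by_cases h : s = t
  · subst h; simp [tensorOf_apply, Matrix.one_apply]
  · obtain ⟨j, hj⟩ := Function.ne_iff.mp h
    rw [tensorOf_apply, Matrix.one_apply_ne h,
      Finset.prod_eq_zero (Finset.mem_univ j) (by simp [Matrix.one_apply, hj])]

lemma tensorOf_mul {ι : Type*} [Fintype ι] [DecidableEq ι] (g h : ι → Matrix (Fin 2) (Fin 2) ℂ) :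
    tensorOf g * tensorOf h = tensorOf (fun i => g i * h i) := by
  classical
  ext s t
  simp only [Matrix.mul_apply, tensorOf_apply]
  rw [Fintype.prod_sum (fun i b => g i (s i) b * h i b (t i))]
  exact Finset.sum_congr rfl fun u _ => (Finset.prod_mul_distrib).symm

lemma op1_eq_tensorOf (P : Matrix (Fin 2) (Fin 2) ℂ) (i : ι) :
    op1 P i = tensorOf (fun j => if j = i then P else 1) := by
  ext s t
  rw [tensorOf_apply, ← Finset.mul_prod_erase _ _ (Finset.mem_univ i), if_pos rfl]
  unfold op1
  congr 1
  exact Finset.prod_congr rfl fun j hj => by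
    rw [if_neg (Finset.mem_erase.mp hj).1, Matrix.one_apply]

lemma prod_ofFn_tensorOf {ι : Type*} [Fintype ι] [DecidableEq ι] :
    ∀ {n : ℕ} (g : Fin n → ι → Matrix (Fin 2) (Fin 2) ℂ),
      (List.ofFn fun i => tensorOf (g i)).prod
        = tensorOf fun j => (List.ofFn fun i => g i j).prod := by
  intro n
  induction n with
  | zero => intro g; simp [tensorOf_one]
  | succ n ih =>
      intro g
      simp only [List.ofFn_succ, List.prod_cons, ih fun i => g i.succ, tensorOf_mul]

lemma prod_ofFn_ite {M : Type*} [Monoid M] :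
    ∀ {n : ℕ} (j : Fin n) (f : Fin n → M),
      (List.ofFn fun i => if j = i then f i else 1).prod = f j := by
  intro n
  induction n with
  | zero => exact fun j => j.elim0
  | succ n ih =>
      intro j f
      induction j using Fin.cases with
      | zero =>
          simp [List.ofFn_succ, fun i : Fin n => (Fin.succ_ne_zero i).symm]
      | succ k =>
          simp only [List.ofFn_succ, List.prod_cons, if_neg (Fin.succ_ne_zero k),
            Fin.succ_inj, one_mul]
          exact ih k fun i => f i.succ

lemma prod_ofFn_diagonal {α : Type*} [Fintype α] [DecidableEq α] :
    ∀ {n : ℕ} (d : Fin n → α → ℂ),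
      (List.ofFn fun i => Matrix.diagonal (d i)).prod
        = Matrix.diagonal fun x => ∏ i, d i x := by
  intro n
  induction n with
  | zero => intro d; simp
  | succ n ih =>
      intro d
      simp only [List.ofFn_succ, List.prod_cons, ih fun i => d i.succ,
        Matrix.diagonal_mul_diagonal]
      have hx : (fun x => d 0 x * ∏ i : Fin n, d i.succ x)
          = fun x => ∏ i : Fin (n + 1), d i x := by
        funext x; rw [Fin.prod_univ_succ]
      rw [hx]

lemma prod_map_kron_one {N : ℕ} (l : List (MatQ N)) :
    (l.map fun A => (1 : MatQ N) ⊗ₖ A).prod = (1 : MatQ N) ⊗ₖ l.prod := by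
  induction l with
  | nil => simp [Matrix.one_kronecker_one]
  | cons A l ih =>
      rw [List.map_cons, List.prod_cons, List.prod_cons, ih,
        ← Matrix.mul_kronecker_mul, one_mul]

lemma sqrt2C_ne_zero : (Real.sqrt 2 : ℂ) ≠ 0 := by
  simpa using (Real.sqrt_ne_zero' ).mpr (by norm_num : (0:ℝ) < 2)

lemma sqrt2C_mul_self : (Real.sqrt 2 : ℂ) * (Real.sqrt 2 : ℂ) = 2 := by
  rw [← Complex.ofReal_mul, Real.mul_self_sqrt (by norm_num)]
  norm_num

lemma Hg_apply (a b : Fin 2) :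
    Hg a b = (Real.sqrt 2 : ℂ)⁻¹ * (if a = 1 ∧ b = 1 then -1 else 1) := by
  fin_cases a <;> fin_cases b <;> simp [Hg]

lemma hadamardLayer_eq (N : ℕ) : hadamardLayer N = tensorOf fun _ : Fin N => Hg := by
  unfold hadamardLayer
  simp only [op1_eq_tensorOf, prod_ofFn_tensorOf]
  exact congrArg tensorOf (funext fun j => prod_ofFn_ite j fun _ => Hg)

lemma hadamardLayer_mul_self (N : ℕ) : hadamardLayer N * hadamardLayer N = 1 := by
  rw [hadamardLayer_eq, tensorOf_mul]
  simp only [Hg_mul_Hg]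
  exact tensorOf_one

lemma czIO_prod (N : ℕ) :
    (List.ofFn fun i : Fin N => czIO i).prod
      = Matrix.diagonal fun p : QIdx N × QIdx N =>
          ∏ i, if p.1 i = 1 ∧ p.2 i = 1 then (-1 : ℂ) else 1 := by
  unfold czIO
  exact prod_ofFn_diagonal _

lemma UT_eq {N : ℕ} (T : MatQ N) :
    UT T = ((1 : MatQ N) ⊗ₖ (T * hadamardLayer N)) *
      Matrix.diagonal (fun p : QIdx N × QIdx N =>
        ∏ i, if p.1 i = 1 ∧ p.2 i = 1 then (-1 : ℂ) else 1) := by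
  have h1 : (List.ofFn fun i : Fin N => (1 : MatQ N) ⊗ₖ op1 Hg i).prod
      = (1 : MatQ N) ⊗ₖ hadamardLayer N := by
    unfold hadamardLayer
    rw [← prod_map_kron_one, List.map_ofFn]
    rfl
  unfold UT
  rw [h1, czIO_prod, ← Matrix.mul_kronecker_mul, one_mul]

lemma kron_one_mulVec {N : ℕ} (M : MatQ N) (u : QIdx N × QIdx N → ℂ) (s t : QIdx N) :
    ((1 : MatQ N) ⊗ₖ M).mulVec u (s, t) = ∑ t', M t t' * u (s, t') := by
  classical
  simp only [Matrix.mulVec, dotProduct, Fintype.sum_prod_type,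
    Matrix.kroneckerMap_apply, Matrix.one_apply, ite_mul, one_mul, zero_mul]
  rw [Finset.sum_comm]
  simp [Finset.sum_ite_eq]

lemma diag_mulVec {α : Type*} [Fintype α] [DecidableEq α] (d : α → ℂ) (v : α → ℂ) (x : α) :
    (Matrix.diagonal d).mulVec v x = d x * v x := by
  simp [Matrix.mulVec, dotProduct, Matrix.diagonal_apply, ite_mul, zero_mul]

/-- one unit cell of MBQC with all-|+⟩ outcomes implements `T`:
`(√2)^N (⟨+|^{⊗N} ⊗ 1) U_T (|ψ⟩ ⊗ |+⟩^{⊗N}) = T|ψ⟩`. -/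
theorem mbqc_unit_cell {N : ℕ} (T : MatQ N)
    (hT : T ∈ Matrix.unitaryGroup (QIdx N) ℂ) (ψ : QIdx N → ℂ) :
    ((Real.sqrt 2 : ℂ) ^ N) •
        contractIn (fun _ => braPlus)
          ((UT T).mulVec (kronVec ψ (ketPlusAll (Fin N)))) =
      T.mulVec ψ := by
  classical
  set c : ℂ := (Real.sqrt 2 : ℂ)⁻¹ with hc
  set d : QIdx N × QIdx N → ℂ :=
    fun p => ∏ i, if p.1 i = 1 ∧ p.2 i = 1 then (-1 : ℂ) else 1 with hd
  set M : MatQ N := T * hadamardLayer N with hMdef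
  have h1 : (Real.sqrt 2 : ℂ) ^ N * c ^ N = 1 := by
    rw [hc, ← mul_pow, mul_inv_cancel₀ sqrt2C_ne_zero, one_pow]
  have hbra : ∀ s : QIdx N, (∏ i, braPlus (s i)) = c ^ N := by
    intro s
    simp [braPlus, ketPlus, Complex.star_def, map_inv₀, Complex.conj_ofReal, hc]
  have hket : ketPlusAll (Fin N) = fun _ => c ^ N := by
    funext s
    simp [ketPlusAll, ketPlus, hc]
  have hHL : ∀ t' s : QIdx N, hadamardLayer N t' s = c ^ N * d (s, t') := by
    intro t' s
    rw [hadamardLayer_eq]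
    rw [show (tensorOf fun _ : Fin N => Hg) t' s = ∏ i, Hg (t' i) (s i) from rfl]
    simp only [Hg_apply]
    rw [Finset.prod_mul_distrib, Finset.prod_const, Finset.card_univ, Fintype.card_fin, hc, hd]
    refine congrArg₂ _ rfl (Finset.prod_congr rfl fun i _ => ?_)
    by_cases h : s i = 1 <;> by_cases h' : t' i = 1 <;> simp [h, h']
  have hUv : ∀ s t : QIdx N,
      (UT T).mulVec (kronVec ψ (ketPlusAll (Fin N))) (s, t)
        = ∑ t', M t t' * (d (s, t') * (ψ s * c ^ N)) := by
    intro s t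
    rw [UT_eq, ← Matrix.mulVec_mulVec, kron_one_mulVec]
    refine Finset.sum_congr rfl fun t' _ => ?_
    rw [diag_mulVec]
    simp only [kronVec, hket, hd]
    rfl
  funext t
  simp only [Pi.smul_apply, smul_eq_mul, contractIn, hUv, hbra]
  have key : ∀ (s t' : QIdx N),
      (Real.sqrt 2 : ℂ) ^ N * (c ^ N * (M t t' * (d (s, t') * (ψ s * c ^ N))))
        = M t t' * (hadamardLayer N t' s * ψ s) := by
    intro s t'
    rw [hHL]
    linear_combination (M t t' * d (s, t') * ψ s * c ^ N) * h1
  calc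
    (Real.sqrt 2 : ℂ) ^ N * ∑ s, c ^ N * ∑ t', M t t' * (d (s, t') * (ψ s * c ^ N))
        = ∑ s, ∑ t', (Real.sqrt 2 : ℂ) ^ N * (c ^ N * (M t t' * (d (s, t') * (ψ s * c ^ N)))) := by
          rw [Finset.mul_sum]
          exact Finset.sum_congr rfl fun s _ => by rw [Finset.mul_sum, Finset.mul_sum]
    _ = ∑ s, ∑ t', M t t' * (hadamardLayer N t' s * ψ s) := by
          exact Finset.sum_congr rfl fun s _ => Finset.sum_congr rfl fun t' _ => key s t'
    _ = ∑ t', M t t' * ∑ s, hadamardLayer N t' s * ψ s := by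
          rw [Finset.sum_comm]
          exact Finset.sum_congr rfl fun t' _ => (Finset.mul_sum _ _ _).symm
    _ = T.mulVec ψ t := by
          have : T = M * hadamardLayer N := by
            rw [hMdef, Matrix.mul_assoc, hadamardLayer_mul_self, Matrix.mul_one]
          conv_rhs => rw [this, ← Matrix.mulVec_mulVec]
          simp [Matrix.mulVec, dotProduct]

end QCA

end
end
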